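/- Let G be a connected graph of order n ≥ 2. If γ_P(G) ≥ n/4, then th_pd×(G) = γ(G). -/

import Mathlib

open SimpleGraph Set

variable {V : Type*} {W : Type*}

/-- The closed neighborhood of a set `S`. -/
def closedNbhdSet (G : SimpleGraph V) (S : Set V) : Set V :=
  S ∪ {w | ∃ u ∈ S, G.Adj u w}

/-- One round of the zero forcing propagation step. -/
def pdStep (G : SimpleGraph V) (A : Set V) : Set V :=
  A ∪ {w | ∃ u ∈ A, G.neighborSet u \ A = {w}}

/-- `obs G S k` is the set `P^[k](S)` of vertices observed after round `k`. -/
def obs (G : SimpleGraph V) (S : Set V) : ℕ → Set V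
  | 0 => S
  | 1 => closedNbhdSet G S
  | (n + 2) => pdStep G (obs G S (n + 1))

/-- `S` is a power dominating set. -/
def IsPDS (G : SimpleGraph V) (S : Set V) : Prop :=
  ∃ t, obs G S t = Set.univ

/-- The power propagation time `pt_pd(G;S)`: least positive `t` with `P^[t](S) = V(G)`. -/
noncomputable def ptpd (G : SimpleGraph V) (S : Set V) : ℕ :=
  sInf {t | 1 ≤ t ∧ obs G S t = Set.univ}

/-- `S` is a dominating set. -/
def IsDomSet (G : SimpleGraph V) (S : Set V) : Prop :=
  closedNbhdSet G S = Set.univ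

/-- The domination number `γ(G)`. -/
noncomputable def gamma (G : SimpleGraph V) : ℕ :=
  sInf {k | ∃ S : Set V, IsDomSet G S ∧ S.ncard = k}

/-- The power domination number `γ_P(G)`. -/
noncomputable def gammaP (G : SimpleGraph V) : ℕ :=
  sInf {k | ∃ S : Set V, IsPDS G S ∧ S.ncard = k}

/-- The product power throttling number `th_pd^×(G)`. -/
noncomputable def thpd (G : SimpleGraph V) : ℕ :=
  sInf {m | ∃ S : Set V, IsPDS G S ∧ m = S.ncard * ptpd G S}

/-- The power propagation time of `G`: minimum over minimum power dominating sets. -/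
noncomputable def ptG (G : SimpleGraph V) : ℕ :=
  sInf {t | ∃ S : Set V, IsPDS G S ∧ S.ncard = gammaP G ∧ t = ptpd G S}

/-- `newObs G S k` is `P^(k)(S)`, the set of vertices first observed in round `k`. -/
def newObs (G : SimpleGraph V) (S : Set V) : ℕ → Set V
  | 0 => S
  | (k + 1) => obs G S (k + 1) \ obs G S k

/-- `rd G S v` is the round in which `v` is first observed. -/
noncomputable def rd (G : SimpleGraph V) (S : Set V) (v : V) : ℕ :=
  sInf {k | v ∈ obs G S k}


lemma closedNbhd_univ (G : SimpleGraph V) : closedNbhdSet G (Set.univ : Set V) = Set.univ := by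
  simp [closedNbhdSet]

lemma exists_adj_of_connected [Fintype V] (G : SimpleGraph V) (hG : G.Connected)
    (hn : 2 ≤ Fintype.card V) (v : V) : ∃ w, G.Adj v w := by
  obtain ⟨u, hu⟩ := Fintype.exists_ne_of_one_lt_card (by omega) v
  obtain ⟨p⟩ := hG.preconnected v u
  cases p with
  | nil => exact absurd rfl hu
  | cons h q => exact ⟨_, h⟩

lemma two_gamma_le [Fintype V] (G : SimpleGraph V) (hG : G.Connected)
    (hn : 2 ≤ Fintype.card V) : 2 * gamma G ≤ Fintype.card V := by
  obtain ⟨M, hMind, hMmax⟩ := Set.Finite.exists_maximalFor (id : Set V → Set V)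
      {S : Set V | ∀ u ∈ S, ∀ w ∈ S, ¬ G.Adj u w} (Set.toFinite _)
      ⟨∅, by simp⟩
  simp only [Set.mem_setOf_eq, id] at hMind hMmax
  have hdomM : IsDomSet G M := by
    ext v
    simp only [closedNbhdSet, Set.mem_union, Set.mem_setOf_eq, Set.mem_univ, iff_true]
    by_cases hv : v ∈ M
    · exact Or.inl hv
    · right
      by_contra hc
      push_neg at hc
      have hind : ∀ u ∈ M ∪ {v}, ∀ w ∈ M ∪ {v}, ¬ G.Adj u w := by
        rintro u (hu | hu) w (hw | hw)
        · exact hMind u hu w hw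
        · simp only [Set.mem_singleton_iff] at hw; subst hw
          intro ha; exact hc u hu ha
        · simp only [Set.mem_singleton_iff] at hu; subst hu
          intro ha; exact hc w hw ha.symm
        · simp only [Set.mem_singleton_iff] at hu hw; subst hu; subst hw
          exact G.irrefl
      have heqM := hMmax hind Set.subset_union_left
      exact hv (heqM (Set.mem_union_right M rfl))
  have hdomC : IsDomSet G Mᶜ := by
    ext v
    simp only [closedNbhdSet, Set.mem_union, Set.mem_setOf_eq, Set.mem_univ, iff_true]
    by_cases hv : v ∈ M
    · right
      obtain ⟨w, hw⟩ := exists_adj_of_connected G hG hn v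
      exact ⟨w, fun hwM => hMind v hv w hwM hw, hw.symm⟩
    · exact Or.inl hv
  have h1 : gamma G ≤ M.ncard := Nat.sInf_le ⟨M, hdomM, rfl⟩
  have h2 : gamma G ≤ Mᶜ.ncard := Nat.sInf_le ⟨Mᶜ, hdomC, rfl⟩
  have h3 : M.ncard + Mᶜ.ncard = Fintype.card V := by
    rw [Set.ncard_add_ncard_compl]
    exact Nat.card_eq_fintype_card
  omega

theorem stmt9 [Fintype V] (G : SimpleGraph V) (hG : G.Connected)
    (hn : 2 ≤ Fintype.card V)
    (h : (Fintype.card V : ℝ) / 4 ≤ (gammaP G : ℝ)) :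
    thpd G = gamma G := by
  -- extract a minimum dominating set
  have hγmem : gamma G ∈ {k | ∃ S : Set V, IsDomSet G S ∧ S.ncard = k} := by
    apply Nat.sInf_mem
    exact ⟨(Set.univ : Set V).ncard, Set.univ, closedNbhd_univ G, rfl⟩
  obtain ⟨D, hDdom, hDcard⟩ := hγmem
  have hDobs : obs G D 1 = Set.univ := hDdom
  have hDpds : IsPDS G D := ⟨1, hDobs⟩
  have hDpt : ptpd G D = 1 := by
    apply le_antisymm
    · exact Nat.sInf_le ⟨le_refl 1, hDobs⟩
    · exact le_csInf ⟨1, le_refl 1, hDobs⟩ fun t ht => ht.1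
  have hle : thpd G ≤ gamma G := by
    apply Nat.sInf_le
    exact ⟨D, hDpds, by rw [hDpt, hDcard, Nat.mul_one]⟩
  refine le_antisymm hle ?_
  -- lower bound
  have hthmem : thpd G ∈ {m | ∃ S : Set V, IsPDS G S ∧ m = S.ncard * ptpd G S} := by
    apply Nat.sInf_mem
    exact ⟨D.ncard * ptpd G D, D, hDpds, rfl⟩
  obtain ⟨S, hSpds, hSeq⟩ := hthmem
  have hne : {t | 1 ≤ t ∧ obs G S t = Set.univ}.Nonempty := by
    obtain ⟨t0, ht0⟩ := hSpds
    rcases Nat.eq_zero_or_pos t0 with h0 | h0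
    · subst h0
      refine ⟨1, le_refl 1, ?_⟩
      have : S = Set.univ := ht0
      rw [show obs G S 1 = closedNbhdSet G S from rfl, this, closedNbhd_univ]
    · exact ⟨t0, h0, ht0⟩
  have hptmem := Nat.sInf_mem hne
  obtain ⟨hpt1, hptobs⟩ := hptmem
  set t := ptpd G S with hts
  rcases eq_or_lt_of_le hpt1 with h1 | h2
  · -- t = 1 : S is dominating
    have ht1 : t = 1 := by rw [hts]; exact h1.symm
    have hSdom : IsDomSet G S := by
      rw [← h1] at hptobs; exact hptobs
    have : gamma G ≤ S.ncard := Nat.sInf_le ⟨S, hSdom, rfl⟩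
    rw [hSeq, ht1, Nat.mul_one]; exact this
  · -- t ≥ 2
    have hγP : gammaP G ≤ S.ncard := Nat.sInf_le ⟨S, hSpds, rfl⟩
    have hn4 : Fintype.card V ≤ 4 * gammaP G := by
      rw [div_le_iff₀ (by norm_num : (0:ℝ) < 4)] at h
      exact_mod_cast (by linarith : (Fintype.card V : ℝ) ≤ 4 * (gammaP G : ℝ))
    have h2g := two_gamma_le G hG hn
    have hmul : S.ncard * 2 ≤ S.ncard * t := Nat.mul_le_mul_left _ h2
    rw [hSeq]
    omega
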